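/- Let E be a finite-dimensional real inner product space, L : E → ℝ convex and continuously differentiable, λ > 0 and W₀ ∈ E. Define C(W) = L(W) + (λ/2)‖W−W₀‖². If W : [0,∞) → E is differentiable with W'(t) = −∇C(W(t)) and W(0) = W₀, then for every t ≥ 0 the regulariser R(t) = ½‖W(t)−W₀‖² is controlled by the decrease of the unregularised loss: λ R(t) ≤ ((1 − e^{−λt}) / (2 − e^{−λt})) (L(W₀) − L(W(t))). -/

import Mathlib

open InnerProductSpace

/-- Convexity supporting-hyperplane inequality via the gradient. -/
lemma convex_grad_ineq {E : Type*} [NormedAddCommGroup E] [InnerProductSpace ℝ E]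
    [FiniteDimensional ℝ E] (L : E → ℝ) (hL : ContDiff ℝ 1 L)
    (hconv : ConvexOn ℝ Set.univ L) (x y : E) :
    L x + (inner ℝ (gradient L x) (y - x) : ℝ) ≤ L y := by
  have hLd : Differentiable ℝ L := hL.differentiable one_ne_zero
  set φ : ℝ → ℝ := fun s => L (x + s • (y - x)) with hφdef
  have hφconv : ConvexOn ℝ Set.univ φ := by
    have := hconv.comp_affineMap (AffineMap.lineMap x y : ℝ →ᵃ[ℝ] E)
    have heq : (L ∘ (AffineMap.lineMap x y : ℝ →ᵃ[ℝ] E)) = φ := by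
      funext s
      simp [φ, AffineMap.lineMap_apply, add_comm]
    rw [heq] at this
    simpa using this
  have hline : HasDerivAt (fun s : ℝ => x + s • (y - x)) (y - x) (0 : ℝ) := by
    simpa using ((hasDerivAt_id (0 : ℝ)).smul_const (y - x)).const_add x
  have hgx : HasFDerivAt L (toDual ℝ E (gradient L x)) (x + (0 : ℝ) • (y - x)) := by
    simpa using (hLd x).hasGradientAt.hasFDerivAt
  have hφ' : HasDerivAt φ (inner ℝ (gradient L x) (y - x) : ℝ) 0 := by
    have h := hgx.comp_hasDerivAt 0 hline
    rw [toDual_apply_apply] at h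
    exact h
  have hslope := hφconv.le_slope_of_hasDerivAt (Set.mem_univ (0 : ℝ))
    (Set.mem_univ (1 : ℝ)) one_pos hφ'
  have hφ0 : φ 0 = L x := by simp [φ]
  have hφ1 : φ 1 = L y := by simp [φ]
  rw [slope_def_field] at hslope
  rw [hφ0, hφ1] at hslope
  simp at hslope ⊢
  linarith

theorem stmt7 {E : Type*} [NormedAddCommGroup E] [InnerProductSpace ℝ E]
    [FiniteDimensional ℝ E]
    (L : E → ℝ) (hL : ContDiff ℝ 1 L) (hconv : ConvexOn ℝ Set.univ L)
    (lam : ℝ) (hlam : 0 < lam) (W₀ : E)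
    (C : E → ℝ) (hC : ∀ w, C w = L w + lam / 2 * ‖w - W₀‖ ^ 2)
    (W : ℝ → E) (R : ℝ → ℝ) (hR : ∀ t, R t = 1 / 2 * ‖W t - W₀‖ ^ 2)
    (hW0 : W 0 = W₀)
    (hW : ∀ t : ℝ, HasDerivAt W (-gradient C (W t)) t)
    (t : ℝ) (ht : 0 ≤ t) :
    lam * R t ≤
      ((1 - Real.exp (-lam * t)) / (2 - Real.exp (-lam * t))) * (L W₀ - L (W t)) := by
  have hLd : Differentiable ℝ L := hL.differentiable one_ne_zero
  -- gradient of C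
  have hgradC : ∀ w : E, HasGradientAt C (gradient L w + lam • (w - W₀)) w := by
    intro w
    rw [hasGradientAt_iff_hasFDerivAt]
    have h1 : HasFDerivAt L (toDual ℝ E (gradient L w)) w :=
      (hLd w).hasGradientAt.hasFDerivAt
    have hid : HasFDerivAt (fun v : E => v - W₀) (ContinuousLinearMap.id ℝ E) w :=
      (hasFDerivAt_id w).sub_const W₀
    have h2 := hid.inner ℝ hid
    have h3 := h1.add (h2.const_mul (lam / 2))
    have hCeq : C = fun v => L v + lam / 2 * (inner ℝ (v - W₀) (v - W₀) : ℝ) := by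
      funext v; rw [hC v, real_inner_self_eq_norm_sq]
    rw [hCeq]
    refine h3.congr_fderiv ?_
    ext u
    simp only [ContinuousLinearMap.add_apply, ContinuousLinearMap.coe_smul', Pi.smul_apply,
      ContinuousLinearMap.coe_comp', Function.comp_apply, ContinuousLinearMap.prod_apply,
      ContinuousLinearMap.coe_id', id_eq, fderivInnerCLM_apply, toDual_apply_apply,
      inner_add_left, real_inner_smul_left, smul_eq_mul]
    rw [real_inner_comm u (w - W₀)]
    ring
  have gradC_eq : ∀ w : E, gradient C w = gradient L w + lam • (w - W₀) := fun w =>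
    (hgradC w).gradient
  -- derivative of C ∘ W
  have hCW' : ∀ s : ℝ, HasDerivAt (fun s => C (W s)) (-‖gradient C (W s)‖ ^ 2) s := by
    intro s
    have hg : HasGradientAt C (gradient C (W s)) (W s) := by
      rw [gradC_eq]; exact hgradC (W s)
    have := hg.hasFDerivAt.comp_hasDerivAt s (hW s)
    rw [map_neg, toDual_apply_apply, real_inner_self_eq_norm_sq] at this
    exact this
  have hCWanti : Antitone fun s => C (W s) :=
    antitone_of_hasDerivAt_nonpos hCW' fun s => neg_nonpos.2 (sq_nonneg _)
  -- derivative of R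
  have hR' : ∀ s : ℝ, HasDerivAt R (inner ℝ (W s - W₀) (-gradient C (W s)) : ℝ) s := by
    intro s
    have hf : HasDerivAt (fun s => W s - W₀) (-gradient C (W s)) s := (hW s).sub_const W₀
    have h2 := (hf.inner ℝ hf).const_mul (1 / 2 : ℝ)
    have hReq : R = fun s => 1 / 2 * (inner ℝ (W s - W₀) (W s - W₀) : ℝ) := by
      funext s; rw [hR s, real_inner_self_eq_norm_sq]
    rw [hReq]
    refine h2.congr_deriv ?_
    rw [real_inner_comm (-gradient C (W s)) (W s - W₀)]
    ring
  -- the key differential inequality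
  have hRle : ∀ s : ℝ, (inner ℝ (W s - W₀) (-gradient C (W s)) : ℝ) ≤
      (L W₀ - C (W s)) - lam * R s := by
    intro s
    have hkey := convex_grad_ineq L hL hconv (W s) W₀
    have h1 : (inner ℝ (W s - W₀) (-gradient C (W s)) : ℝ) =
        -(inner ℝ (gradient L (W s)) (W s - W₀) : ℝ) - lam * ‖W s - W₀‖ ^ 2 := by
      rw [gradC_eq, inner_neg_right, inner_add_right, real_inner_smul_right,
        real_inner_self_eq_norm_sq, real_inner_comm]
      ring
    have h2 : (inner ℝ (gradient L (W s)) (W₀ - W s) : ℝ) =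
        -(inner ℝ (gradient L (W s)) (W s - W₀) : ℝ) := by
      rw [← inner_neg_right]; congr 1; abel
    rw [h2] at hkey
    have h3 : C (W s) = L (W s) + lam * R s := by
      rw [hC, hR]; ring
    have h4 : R s = 1 / 2 * ‖W s - W₀‖ ^ 2 := hR s
    rw [h1, h3]
    nlinarith [hkey]
  -- quantities
  set Dt : ℝ := L W₀ - C (W t) with hDt
  have hCW0 : C W₀ = L W₀ := by simp [hC]
  have hDtnonneg : 0 ≤ Dt := by
    have := hCWanti ht
    simp only [hW0, hCW0] at this
    simp only [hDt]
    linarith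
  -- the auxiliary function
  set φ : ℝ → ℝ := fun s => Real.exp (lam * s) * (R s - Dt / lam) with hφdef
  have hφ' : ∀ s : ℝ, HasDerivAt φ
      (Real.exp (lam * s) * ((inner ℝ (W s - W₀) (-gradient C (W s)) : ℝ) + lam * R s - Dt)) s := by
    intro s
    have hexp : HasDerivAt (fun s : ℝ => Real.exp (lam * s)) (lam * Real.exp (lam * s)) s := by
      have := ((hasDerivAt_id s).const_mul lam).exp
      simpa [mul_comm] using this
    have hg : HasDerivAt (fun s => R s - Dt / lam)
        (inner ℝ (W s - W₀) (-gradient C (W s)) : ℝ) s := (hR' s).sub_const _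
    have := hexp.mul hg
    refine this.congr_deriv ?_
    have hlamne : lam ≠ 0 := ne_of_gt hlam
    field_simp
    ring
  have hφanti : AntitoneOn φ (Set.Icc 0 t) := by
    apply antitoneOn_of_hasDerivWithinAt_nonpos (convex_Icc 0 t)
      (fun s _ => (hφ' s).continuousAt.continuousWithinAt)
      (fun s _ => (hφ' s).hasDerivWithinAt)
    intro s hs
    rw [interior_Icc] at hs
    have hst : s ≤ t := le_of_lt hs.2
    have hmono : C (W t) ≤ C (W s) := hCWanti hst
    have h1 := hRle s
    have hexp_pos : 0 < Real.exp (lam * s) := Real.exp_pos _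
    have : (inner ℝ (W s - W₀) (-gradient C (W s)) : ℝ) + lam * R s - Dt ≤ 0 := by
      simp only [hDt]
      linarith
    exact mul_nonpos_of_nonneg_of_nonpos (le_of_lt hexp_pos) this
  have hR0 : R 0 = 0 := by simp [hR, hW0]
  have hφ0 : φ 0 = -(Dt / lam) := by simp [hφdef, hR0]
  have hφt : φ t ≤ -(Dt / lam) := by
    rw [← hφ0]
    exact hφanti (Set.mem_Icc.2 ⟨le_refl 0, ht⟩) (Set.mem_Icc.2 ⟨ht, le_refl t⟩) ht
  -- unravel the Gronwall-type bound
  have hP : Real.exp (lam * t) * (R t - Dt / lam) ≤ -(Dt / lam) := hφt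
  set e : ℝ := Real.exp (-lam * t) with he
  have he_pos : 0 < e := Real.exp_pos _
  have he_le : e ≤ 1 := by
    rw [he]
    apply Real.exp_le_one_iff.2
    nlinarith
  have heP : e * Real.exp (lam * t) = 1 := by
    rw [he, ← Real.exp_add]; simp
  set a : ℝ := lam * R t with ha
  set b : ℝ := L W₀ - L (W t) with hb
  have haD : Dt = b - a := by
    simp only [hDt, hb, ha, hC, hR]
    ring
  have ha_nonneg : 0 ≤ a := by
    rw [ha, hR]
    positivity
  -- from hP : P * (R t - Dt/lam) ≤ -(Dt/lam), multiply by lam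
  have hP2 : Real.exp (lam * t) * (a - Dt) ≤ -Dt := by
    have h := mul_le_mul_of_nonneg_left hP (le_of_lt hlam)
    have hlamne : lam ≠ 0 := ne_of_gt hlam
    calc Real.exp (lam * t) * (a - Dt) = lam * (Real.exp (lam * t) * (R t - Dt / lam)) := by
          field_simp [ha]; ring
      _ ≤ lam * (-(Dt / lam)) := h
      _ = -Dt := by field_simp
  -- multiply by e
  have hP3 : a - Dt ≤ e * (-Dt) := by
    have h := mul_le_mul_of_nonneg_left hP2 (le_of_lt he_pos)
    calc a - Dt = e * Real.exp (lam * t) * (a - Dt) := by rw [heP]; ring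
      _ = e * (Real.exp (lam * t) * (a - Dt)) := by ring
      _ ≤ e * (-Dt) := h
  -- so a ≤ (1 - e) * Dt = (1 - e) * (b - a)
  have hmain : a ≤ (1 - e) * (b - a) := by
    rw [haD] at hP3
    nlinarith
  have h2e : 0 < 2 - e := by linarith
  rw [div_mul_eq_mul_div, le_div_iff₀ h2e]
  nlinarith [hmain]
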